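/- Let G be a finite group whose Sylow 2-subgroup G_2 is generalized quaternion, and let P ⊆ G_2 be a 2-centric subgroup of G. Then 4 does not divide [N_G(P) : P]. -/

import Mathlib

/-- `H` is a Sylow `p`-subgroup of `K` (as subgroups of an ambient group `G`):
`H` is a `p`-subgroup of `K` maximal among `p`-subgroups of `K`. -/
def IsSylowIn {G : Type*} [Group G] (p : ℕ) (H K : Subgroup G) : Prop :=
  H ≤ K ∧ IsPGroup p H ∧ ∀ Q : Subgroup G, Q ≤ K → IsPGroup p Q → H ≤ Q → Q = H

/-- `P` is `p`-centric in `G`: `P` is a `p`-group and `Z(P) = P ⊓ C_G(P)` is a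
Sylow `p`-subgroup of the centralizer `C_G(P)`. -/
def IsPCentric {G : Type*} [Group G] (p : ℕ) (P : Subgroup G) : Prop :=
  IsPGroup p P ∧
    IsSylowIn p (P ⊓ Subgroup.centralizer (P : Set G)) (Subgroup.centralizer (P : Set G))

/-- `P` is principal `p`-radical in `G`: `P` is `p`-centric and
`N_G(P)/(P C_G(P))` has no non-trivial normal `p`-subgroup (stated without
quotients: any `N_G(P)`-invariant subgroup `Q` with `P C_G(P) ≤ Q ≤ N_G(P)`
whose image mod `P C_G(P)` is a `p`-group equals `P C_G(P)`). -/
def IsPrincipalPRadical {G : Type*} [Group G] (p : ℕ) (P : Subgroup G) : Prop :=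
  IsPCentric p P ∧ ∀ Q : Subgroup G,
    P ⊔ Subgroup.centralizer (P : Set G) ≤ Q → Q ≤ (Subgroup.normalizer (P : Set G)) →
    (∀ n ∈ (Subgroup.normalizer (P : Set G)), ∀ q ∈ Q, n * q * n⁻¹ ∈ Q) →
    (∀ q ∈ Q, ∃ k : ℕ, q ^ p ^ k ∈ P ⊔ Subgroup.centralizer (P : Set G)) →
    Q = P ⊔ Subgroup.centralizer (P : Set G)

/-- A group has rank at most 2 at the prime `p`: it contains no elementary
abelian subgroup `(ℤ/p)^3`. -/
def NoRankThree (p : ℕ) (G : Type*) [Group G] : Prop :=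
  ¬ ∃ f : Multiplicative (ZMod p × ZMod p × ZMod p) →* G, Function.Injective f



open QuaternionGroup Subgroup Pointwise

lemma qa_inv {n : ℕ} (i : ZMod (2*n)) : (QuaternionGroup.a i)⁻¹ = QuaternionGroup.a (-i) := rfl
lemma qxa_inv {n : ℕ} (i : ZMod (2*n)) :
    (QuaternionGroup.xa i)⁻¹ = QuaternionGroup.xa ((n : ZMod (2*n)) + i) := rfl

lemma quat_key {S : Type*} [Group S] [Finite S] {m : ℕ}
    (f : S →* QuaternionGroup m) (hf : Function.Injective f)
    (P : Subgroup S) (hn : P.Normal)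
    (hc : ∀ s : S, (∀ p ∈ P, s * p = p * s) → s ∈ P) :
    P.index ≤ 2 := by
  have hmm : (m : ZMod (2 * m)) + m = 0 := by
    have hm : ((2 * m : ℕ) : ZMod (2 * m)) = 0 := ZMod.natCast_self _
    push_cast at hm; linear_combination hm
  have hcomm : ∀ s t : S, f s * f t = f t * f s → s * t = t * s := by
    intro s t h; apply hf; rw [map_mul, map_mul, h]
  set π : S →* S ⧸ P := QuotientGroup.mk' P with hπ
  suffices hS : ∃ c : S ⧸ P, ∀ x : S ⧸ P, x = 1 ∨ x = c by
    obtain ⟨c, hcov⟩ := hS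
    have hsur : Function.Surjective (fun b : Bool => if b then c else (1 : S ⧸ P)) := by
      intro x; rcases hcov x with h | h
      · exact ⟨false, h.symm⟩
      · exact ⟨true, h.symm⟩
    calc P.index = Nat.card (S ⧸ P) := rfl
      _ ≤ Nat.card Bool := Nat.card_le_card_of_surjective _ hsur
      _ = 2 := by simp
  by_cases hxa : ∃ p ∈ P, ∃ j, f p = xa j
  · -- Case B : P contains an `xa`-type element p₀
    obtain ⟨p₀, hp₀, j, hj⟩ := hxa
    have hp₀inv : f p₀⁻¹ = xa ((m : ZMod (2*m)) + j) := by rw [map_inv, hj, qxa_inv]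
    -- all squares lie in P
    have hsq : ∀ s : S, s * s ∈ P := by
      intro s
      rcases hfs : f s with i | i
      · have hconj : s * p₀ * s⁻¹ * p₀⁻¹ ∈ P :=
          mul_mem (hn.conj_mem p₀ hp₀ s) (inv_mem hp₀)
        have hss : s * s = s * p₀ * s⁻¹ * p₀⁻¹ := by
          apply hf
          simp only [map_mul, map_inv, hfs, hj, hp₀inv, qa_inv, a_mul_a, a_mul_xa, xa_mul_a,
            xa_mul_xa]
          congr 1
          first | linear_combination hmm | linear_combination -hmm
        rw [hss]; exact hconj
      · apply hc
        intro p hp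
        apply hcomm
        rcases hfp : f p with u | u <;>
          · simp only [map_mul, hfs, hfp, a_mul_a, a_mul_xa, xa_mul_a, xa_mul_xa]
            congr 1
            first | linear_combination hmm | linear_combination -hmm | ring
    -- the subgroup of `a`-type elements is cyclic
    set ψ : Multiplicative (ZMod (2*m)) →* QuaternionGroup m :=
      MonoidHom.mk' (fun i => QuaternionGroup.a i.toAdd) (fun i j => (a_mul_a _ _).symm) with hψ
    set A : Subgroup S := Subgroup.comap f ψ.range with hA
    have hmemA : ∀ s : S, (∃ i, f s = a i) → s ∈ A := by
      rintro s ⟨i, hi⟩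
      exact ⟨Multiplicative.ofAdd i, hi.symm⟩
    haveI : IsCyclic ↥ψ.range := isCyclic_of_surjective ψ.rangeRestrict ψ.rangeRestrict_surjective
    haveI : IsCyclic ↥(A.map f) := Subgroup.isCyclic_of_le (Subgroup.map_comap_le f ψ.range)
    haveI : IsCyclic ↥A :=
      isCyclic_of_surjective (A.equivMapOfInjective f hf).symm (MulEquiv.surjective _)
    obtain ⟨g, hg⟩ := IsCyclic.exists_monoid_generator (α := ↥A)
    refine ⟨π (g : S), ?_⟩
    have hc2 : π (g : S) ^ 2 = 1 := by
      rw [pow_two, ← map_mul, hπ, QuotientGroup.mk'_apply, QuotientGroup.eq_one_iff]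
      exact hsq _
    have claimA : ∀ s ∈ A, π s = 1 ∨ π s = π (g : S) := by
      intro s hs
      obtain ⟨k, hk⟩ := hg ⟨s, hs⟩
      have hks : ((g : S)) ^ k = s := by
        have := congrArg (Subtype.val) hk
        simpa using this
      have hπs : π s = π (g : S) ^ k := by rw [← hks, map_pow]
      rcases Nat.even_or_odd k with he | ho
      · obtain ⟨t, rfl⟩ := he
        left
        rw [hπs, ← two_mul, pow_mul, hc2, one_pow]
      · obtain ⟨t, rfl⟩ := ho
        right
        rw [hπs, pow_add, pow_mul, hc2, one_pow, one_mul, pow_one]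
    intro x
    refine QuotientGroup.induction_on x ?_
    intro s
    rcases hfs : f s with i | i
    · exact claimA s (hmemA s ⟨i, hfs⟩)
    · have h1 : p₀⁻¹ * s ∈ A := by
        apply hmemA
        refine ⟨i - j, ?_⟩
        rw [map_mul, hp₀inv, hfs, xa_mul_xa]
        congr 1
        first | linear_combination hmm | linear_combination -hmm | ring
      have h2 : π (p₀⁻¹ * s) = π s := by
        rw [map_mul, map_inv]
        have hz : π p₀ = 1 := (QuotientGroup.eq_one_iff _).mpr hp₀
        rw [hz, inv_one, one_mul]
      have h3 : (QuotientGroup.mk s : S ⧸ P) = π s := rfl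
      rw [h3, ← h2]
      exact claimA _ h1
  · -- Case A : every element of P is `a`-type
    push_neg at hxa
    have haP : ∀ s : S, (∃ i, f s = a i) → s ∈ P := by
      rintro s ⟨i, hi⟩
      apply hc
      intro p hp
      rcases hfp : f p with u | u
      · apply hcomm
        rw [hi, hfp, a_mul_a, a_mul_a, add_comm]
      · exact absurd hfp (hxa p hp u)
    by_cases hex : ∃ x₀ : S, ∃ k, f x₀ = xa k
    · obtain ⟨x₀, k, hk⟩ := hex
      refine ⟨π x₀, ?_⟩
      intro x
      refine QuotientGroup.induction_on x ?_
      intro s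
      rcases hfs : f s with i | i
      · left
        exact (QuotientGroup.eq_one_iff s).mpr (haP s ⟨i, hfs⟩)
      · right
        have h1 : x₀⁻¹ * s ∈ P := by
          apply haP
          refine ⟨i - k, ?_⟩
          simp only [map_mul, map_inv, hk, hfs, qxa_inv, xa_mul_xa]
          congr 1
          ring
        show (QuotientGroup.mk s : S ⧸ P) = QuotientGroup.mk x₀
        rw [QuotientGroup.eq]
        have h2 := inv_mem h1
        rwa [mul_inv_rev, inv_inv] at h2
    · refine ⟨1, fun x => ?_⟩
      left
      refine QuotientGroup.induction_on x ?_
      intro s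
      rcases hfs : f s with i | i
      · exact (QuotientGroup.eq_one_iff s).mpr (haP s ⟨i, hfs⟩)
      · exact absurd ⟨s, i, hfs⟩ hex

theorem stmt6 {G : Type*} [Group G] [Fintype G] (Gp : Sylow 2 G)
    (hquat : ∃ n : ℕ, 3 ≤ n ∧
      Nonempty (↥(Gp : Subgroup G) ≃* QuaternionGroup (2 ^ (n - 2))))
    (P : Subgroup G) (hle : P ≤ (Gp : Subgroup G)) (hcen : IsPCentric 2 P) :
    ¬ (4 ∣ P.relIndex (Subgroup.normalizer (P : Set G))) := by
  obtain ⟨n, -, ⟨e⟩⟩ := hquat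
  intro h4
  obtain ⟨hP2, -, -, hmax⟩ := hcen
  haveI : Fact (Nat.Prime 2) := ⟨Nat.prime_two⟩
  set N := Subgroup.normalizer (P : Set G) with hN
  have hPN : P ≤ N := Subgroup.le_normalizer
  have hP2' : IsPGroup 2 (P.subgroupOf N) :=
    hP2.of_equiv (Subgroup.subgroupOfEquivOfLe hPN).symm
  obtain ⟨Sy, hSy⟩ := hP2'.exists_le_sylow
  set S : Subgroup G := (Sy : Subgroup ↥N).map N.subtype with hSdef
  have hPS : P ≤ S := by
    calc P = (P.subgroupOf N).map N.subtype := by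
            rw [Subgroup.subgroupOf_map_subtype, inf_eq_left.mpr hPN]
      _ ≤ S := Subgroup.map_mono hSy
  have hSN : S ≤ N := Subgroup.map_subtype_le _
  have hS2 : IsPGroup 2 ↥S := Sy.2.map N.subtype
  have hodd : ¬ 2 ∣ S.relIndex N := by
    have hSS : S.subgroupOf N = (Sy : Subgroup ↥N) := by
      rw [hSdef, Subgroup.subgroupOf, Subgroup.comap_map_eq_self_of_injective
        N.subtype_injective]
    rw [Subgroup.relIndex, hSS]
    exact Sy.not_dvd_index
  have h4S : 4 ∣ P.relIndex S := by
    have hmul := Subgroup.relIndex_mul_relIndex P S N hPS hSN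
    have hcop : Nat.Coprime 4 (S.relIndex N) := by
      have h2 : Nat.Coprime 2 (S.relIndex N) :=
        (Nat.Prime.coprime_iff_not_dvd Nat.prime_two).mpr hodd
      have h3 := h2.pow_left 2
      norm_num at h3
      exact h3
    exact hcop.dvd_of_dvd_mul_right (hmul ▸ h4)
  -- conjugate S into Gp
  obtain ⟨Sy2, hSSy2⟩ := hS2.exists_le_sylow
  obtain ⟨g, hg⟩ := MulAction.exists_smul_eq G Sy2 Gp
  have hmem : ∀ s : ↥S, g * (s : G) * g⁻¹ ∈ (Gp : Subgroup G) := by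
    intro s
    have h1 : MulAut.conj g • (s : G) ∈ MulAut.conj g • (Sy2 : Subgroup G) :=
      Subgroup.smul_mem_pointwise_smul_iff.mpr (hSSy2 s.2)
    rw [← Sylow.coe_subgroup_smul, hg] at h1
    simpa [MulAut.smul_def] using h1
  set φ : ↥S →* ↥(Gp : Subgroup G) :=
    { toFun := fun s => ⟨g * (s : G) * g⁻¹, hmem s⟩
      map_one' := by ext; simp
      map_mul' := by intro s t; ext; push_cast; group } with hφ
  have hφinj : Function.Injective φ := by
    intro s t h
    have h2 := congrArg Subtype.val h
    simp only [hφ] at h2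
    ext
    exact mul_left_cancel (mul_right_cancel h2)
  set f : ↥S →* QuaternionGroup (2 ^ (n - 2)) := e.toMonoidHom.comp φ with hfdef
  have hf : Function.Injective f := e.injective.comp hφinj
  set P' : Subgroup ↥S := P.subgroupOf S with hP'
  have hnorm : P'.Normal := by
    constructor
    intro p hp s
    rw [Subgroup.mem_subgroupOf] at hp ⊢
    push_cast
    exact (Subgroup.mem_normalizer_iff.mp (hSN s.2) _).mp hp
  have hcent : ∀ s : ↥S, (∀ p ∈ P', s * p = p * s) → s ∈ P' := by
    intro s hcs
    have hsC : (s : G) ∈ Subgroup.centralizer (P : Set G) := by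
      rw [Subgroup.mem_centralizer_iff]
      intro h hh
      have hmem' : (⟨h, hPS hh⟩ : ↥S) ∈ P' := Subgroup.mem_subgroupOf.mpr hh
      have hcv := congrArg Subtype.val (hcs _ hmem')
      push_cast at hcv
      exact hcv.symm
    have hQ : S ⊓ Subgroup.centralizer (P : Set G)
        = P ⊓ Subgroup.centralizer (P : Set G) :=
      hmax _ inf_le_right hS2.to_inf_left (inf_le_inf_right _ hPS)
    have hs' : (s : G) ∈ P ⊓ Subgroup.centralizer (P : Set G) := by
      rw [← hQ]; exact ⟨s.2, hsC⟩
    exact Subgroup.mem_subgroupOf.mpr hs'.1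
  have hidx : P'.index ≤ 2 := quat_key f hf P' hnorm hcent
  have h4' : 4 ∣ P'.index := h4S
  have h0 : P'.index ≠ 0 := Subgroup.index_ne_zero_of_finite
  have := Nat.le_of_dvd (Nat.pos_of_ne_zero h0) h4'
  omega
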